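/- For any vector x ∈ ℝⁿ and constants a ∈ ℝ, b > 0, the function P₃(x) = √((‖x‖² + a)² + b) is twice continuously differentiable and its Hessian satisfies −L·I ⪯ ∇²P₃(x) ⪯ L·I for all x, where L = 2 + 8 + 8|a|/√b = 10 + 8|a|/√b. -/

import Mathlib

open scoped RealInnerProductSpace

-- gradient formula
theorem aux_grad {n : ℕ} (a b : ℝ) (hb : 0 < b) :
    gradient (fun x : EuclideanSpace ℝ (Fin n) => Real.sqrt ((‖x‖ ^ 2 + a) ^ 2 + b))
      = fun x => (2 * (‖x‖ ^ 2 + a) / Real.sqrt ((‖x‖ ^ 2 + a) ^ 2 + b)) • x := by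
  apply gradient_eq
  intro x
  have hq : (0:ℝ) < (‖x‖ ^ 2 + a) ^ 2 + b := by positivity
  have hn : HasFDerivAt (fun y : EuclideanSpace ℝ (Fin n) => ‖y‖ ^ 2)
      (2 • (innerSL ℝ x)) x := (hasStrictFDerivAt_norm_sq x).hasFDerivAt
  have hφ : HasDerivAt (fun u : ℝ => Real.sqrt ((u + a) ^ 2 + b))
      ((↑2 * (‖x‖ ^ 2 + a) ^ (2-1) * 1) / (2 * Real.sqrt ((‖x‖ ^ 2 + a) ^ 2 + b)))
      (‖x‖ ^ 2) :=
    ((((hasDerivAt_id (‖x‖ ^ 2)).add_const a).pow 2).add_const b).sqrt hq.ne'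
  have h2 := hφ.comp_hasFDerivAt x hn
  rw [hasGradientAt_iff_hasFDerivAt]
  refine h2.congr_fderiv (Eq.symm ?_)
  ext v
  have hr : Real.sqrt ((‖x‖ ^ 2 + a) ^ 2 + b) ≠ 0 := (Real.sqrt_pos.2 hq).ne'
  simp [real_inner_smul_left]
  field_simp

open scoped RealInnerProductSpace

theorem aux_fderiv {n : ℕ} (a b : ℝ) (hb : 0 < b) (x : EuclideanSpace ℝ (Fin n)) :
    HasFDerivAt (fun y : EuclideanSpace ℝ (Fin n) =>
        (2 * (‖y‖ ^ 2 + a) / Real.sqrt ((‖y‖ ^ 2 + a) ^ 2 + b)) • y)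
      ((2 * (‖x‖ ^ 2 + a) / Real.sqrt ((‖x‖ ^ 2 + a) ^ 2 + b)) • ContinuousLinearMap.id ℝ _
        + ((2 * b / (Real.sqrt ((‖x‖ ^ 2 + a) ^ 2 + b)) ^ 3) • (2 • (innerSL ℝ x))).smulRight x)
      x := by
  set t := ‖x‖ ^ 2 with ht
  have hq : (0:ℝ) < (t + a) ^ 2 + b := by positivity
  have hr : (0:ℝ) < Real.sqrt ((t + a) ^ 2 + b) := Real.sqrt_pos.2 hq
  have hr2 : (Real.sqrt ((t + a) ^ 2 + b)) ^ 2 = (t + a) ^ 2 + b := Real.sq_sqrt hq.le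
  have hn : HasFDerivAt (fun y : EuclideanSpace ℝ (Fin n) => ‖y‖ ^ 2)
      (2 • (innerSL ℝ x)) x := (hasStrictFDerivAt_norm_sq x).hasFDerivAt
  have hden : HasDerivAt (fun u : ℝ => Real.sqrt ((u + a) ^ 2 + b))
      ((↑2 * (t + a) ^ (2-1) * 1) / (2 * Real.sqrt ((t + a) ^ 2 + b))) t :=
    ((((hasDerivAt_id t).add_const a).pow 2).add_const b).sqrt hq.ne'
  have hnum : HasDerivAt (fun u : ℝ => 2 * (u + a)) (2 * 1) t :=
    ((hasDerivAt_id t).add_const a).const_mul 2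
  have hc : HasDerivAt (fun u : ℝ => 2 * (u + a) / Real.sqrt ((u + a) ^ 2 + b))
      (2 * b / (Real.sqrt ((t + a) ^ 2 + b)) ^ 3) t := by
    have := hnum.div hden hr.ne'
    refine this.congr_deriv (Eq.symm ?_)
    set r := Real.sqrt ((t + a) ^ 2 + b) with hrdef
    field_simp
    linear_combination (-1) * hr2
  have hcomp : HasFDerivAt
      (fun y : EuclideanSpace ℝ (Fin n) => 2 * (‖y‖ ^ 2 + a) / Real.sqrt ((‖y‖ ^ 2 + a) ^ 2 + b))
      ((2 * b / (Real.sqrt ((t + a) ^ 2 + b)) ^ 3) • (2 • (innerSL ℝ x))) x :=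
    by have := hc.comp_hasFDerivAt x hn; exact this
  exact hcomp.smul (hasFDerivAt_id x)

theorem aux_key (a b t p V : ℝ) (hb : 0 < b) (ht : 0 ≤ t) (hV : 0 ≤ V) (hp : p ^ 2 ≤ t * V) :
    |2 * (t + a) / Real.sqrt ((t + a) ^ 2 + b) * V
      + 2 * b / (Real.sqrt ((t + a) ^ 2 + b)) ^ 3 * (2 * p) * p|
      ≤ (10 + 8 * |a| / Real.sqrt b) * V := by
  set s := t + a with hs
  set r := Real.sqrt (s ^ 2 + b) with hrdef
  set rb := Real.sqrt b with hrbdef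
  have hq : (0:ℝ) < s ^ 2 + b := by positivity
  have hr : 0 < r := Real.sqrt_pos.2 hq
  have hr2 : r ^ 2 = s ^ 2 + b := Real.sq_sqrt hq.le
  have hrb : 0 < rb := Real.sqrt_pos.2 hb
  have hrb2 : rb ^ 2 = b := Real.sq_sqrt hb.le
  have hsr : |s| ≤ r := by
    rw [hrdef, ← Real.sqrt_sq_eq_abs]
    exact Real.sqrt_le_sqrt (by nlinarith)
  have hbr : rb ≤ r := Real.sqrt_le_sqrt (by nlinarith)
  have ha : 0 ≤ |a| := abs_nonneg a
  have htr : t ≤ r + |a| := by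
    have : t = s - a := by rw [hs]; ring
    rw [this]
    calc s - a ≤ |s| + |a| := by
          have h1 := le_abs_self s
          have h2 := neg_abs_le a
          linarith
      _ ≤ r + |a| := by linarith
  have hA : |2 * s / r * V| ≤ 2 * V := by
    rw [abs_mul, abs_div, abs_of_nonneg hV, abs_of_pos hr]
    have : |2 * s| / r ≤ 2 := by
      rw [div_le_iff₀ hr, abs_mul]
      simp only [Nat.abs_ofNat]
      nlinarith
    nlinarith [abs_nonneg (2 * s), div_nonneg (abs_nonneg (2*s)) hr.le]
  have hBval : 2 * b / r ^ 3 * (2 * p) * p = 4 * b / r ^ 3 * p ^ 2 := by ring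
  have hB0 : 0 ≤ 2 * b / r ^ 3 * (2 * p) * p := by rw [hBval]; positivity
  have hcoef : 4 * b / r ^ 3 * t ≤ 4 + 4 * |a| / rb := by
    have h1 : 4 * b / r ^ 2 ≤ 4 := by
      rw [div_le_iff₀ (by positivity)]
      nlinarith
    have h2 : 4 * b * |a| / r ^ 3 ≤ 4 * |a| / rb := by
      rw [div_le_div_iff₀ (by positivity) hrb]
      have hr3 : rb ^ 3 ≤ r ^ 3 := by nlinarith
      have hkey : 4 * b * |a| * rb = 4 * |a| * rb ^ 3 := by rw [← hrb2]; ring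
      have : 4 * |a| * rb ^ 3 ≤ 4 * |a| * r ^ 3 :=
        mul_le_mul_of_nonneg_left hr3 (by positivity)
      linarith
    have h3 : 4 * b / r ^ 3 * t ≤ 4 * b / r ^ 3 * (r + |a|) :=
      mul_le_mul_of_nonneg_left htr (by positivity)
    have h4 : 4 * b / r ^ 3 * (r + |a|) = 4 * b / r ^ 2 + 4 * b * |a| / r ^ 3 := by
      field_simp
    linarith
  have hB : 2 * b / r ^ 3 * (2 * p) * p ≤ (4 + 4 * |a| / rb) * V := by
    rw [hBval]
    calc 4 * b / r ^ 3 * p ^ 2 ≤ 4 * b / r ^ 3 * (t * V) :=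
          mul_le_mul_of_nonneg_left hp (by positivity)
      _ = 4 * b / r ^ 3 * t * V := by ring
      _ ≤ (4 + 4 * |a| / rb) * V := mul_le_mul_of_nonneg_right hcoef hV
  calc |2 * s / r * V + 2 * b / r ^ 3 * (2 * p) * p|
      ≤ |2 * s / r * V| + |2 * b / r ^ 3 * (2 * p) * p| := abs_add_le _ _
    _ = |2 * s / r * V| + 2 * b / r ^ 3 * (2 * p) * p := by rw [abs_of_nonneg hB0]
    _ ≤ 2 * V + (4 + 4 * |a| / rb) * V := by linarith
    _ ≤ (10 + 8 * |a| / rb) * V := by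
        have h5 : 0 ≤ |a| / rb := div_nonneg ha hrb.le
        have h6 : 0 ≤ |a| / rb * V := mul_nonneg h5 hV
        have h7 : 4 * |a| / rb * V = 4 * (|a| / rb * V) := by ring
        have h8 : 8 * |a| / rb * V = 8 * (|a| / rb * V) := by ring
        nlinarith [h6]

/-- `P₃(x) = √((‖x‖² + a)² + b)` is C² with Hessian eigenvalues bounded by
`L = 10 + 8|a|/√b` in absolute value. -/
theorem stmt3 {n : ℕ} (a b : ℝ) (hb : 0 < b) :
    ContDiff ℝ 2 (fun x : EuclideanSpace ℝ (Fin n) =>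
      Real.sqrt ((‖x‖ ^ 2 + a) ^ 2 + b)) ∧
    ∀ (x v : EuclideanSpace ℝ (Fin n)),
      |⟪(fderiv ℝ (gradient (fun x : EuclideanSpace ℝ (Fin n) =>
          Real.sqrt ((‖x‖ ^ 2 + a) ^ 2 + b))) x) v, v⟫| ≤
        (10 + 8 * |a| / Real.sqrt b) * ‖v‖ ^ 2 := by
  constructor
  · exact ((((contDiff_norm_sq ℝ).add contDiff_const).pow 2).add contDiff_const).sqrt
      (fun x => by positivity)
  · intro x v
    rw [aux_grad a b hb, (aux_fderiv a b hb x).fderiv]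
    have hp : ⟪x, v⟫ ^ 2 ≤ ‖x‖ ^ 2 * ‖v‖ ^ 2 := by
      have := real_inner_mul_inner_self_le x v
      rw [real_inner_self_eq_norm_sq, real_inner_self_eq_norm_sq] at this
      nlinarith [this]
    have key := aux_key a b (‖x‖ ^ 2) ⟪x, v⟫ (‖v‖ ^ 2) hb (by positivity) (by positivity) hp
    simp only [ContinuousLinearMap.add_apply, ContinuousLinearMap.coe_smul', Pi.smul_apply,
      ContinuousLinearMap.id_apply, ContinuousLinearMap.smulRight_apply,
      ContinuousLinearMap.smul_apply, innerSL_apply_apply, inner_add_left, real_inner_smul_left,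
      smul_eq_mul, real_inner_self_eq_norm_sq]
    convert key using 2
    ring
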